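/- Let h₁,...,h_k be averaged operators on a real Hilbert space with ∩_{j=1}^k Fix(h_j) ≠ ∅. Then Fix(h_k ∘ ... ∘ h_1) = ∩_{j=1}^k Fix(h_j). -/

import Mathlib

section Aux

variable {H : Type*} [NormedAddCommGroup H] [InnerProductSpace ℝ H]

private lemma avg_norm_sq_identity (c : ℝ) (a b : H) :
    ‖(1 - c) • a + c • b‖ ^ 2
      = (1 - c) * ‖a‖ ^ 2 + c * ‖b‖ ^ 2 - c * (1 - c) * ‖a - b‖ ^ 2 := by
  have e1 : ‖(1 - c) • a + c • b‖ ^ 2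
      = (inner ℝ ((1 - c) • a + c • b) ((1 - c) • a + c • b) : ℝ) := by
    rw [real_inner_self_eq_norm_sq]
  have e2 : ‖a‖ ^ 2 = (inner ℝ a a : ℝ) := (real_inner_self_eq_norm_sq a).symm
  have e3 : ‖b‖ ^ 2 = (inner ℝ b b : ℝ) := (real_inner_self_eq_norm_sq b).symm
  have e4 : ‖a - b‖ ^ 2
      = (inner ℝ a a : ℝ) - 2 * (inner ℝ a b : ℝ) + (inner ℝ b b : ℝ) := by
    rw [← real_inner_self_eq_norm_sq, inner_sub_sub_self]
    rw [real_inner_comm b a]; ring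
  rw [e1, e2, e3, e4]
  simp only [inner_add_add_self, real_inner_smul_left, real_inner_smul_right,
    real_inner_comm b a]
  ring

/-- Fixed points of an averaged map with fixed point `p` are detected by
norm nonexpansion toward `p`. -/
private lemma averaged_rigid {c : ℝ} (hc : c ∈ Set.Ioo (0 : ℝ) 1) {N : H → H}
    (hN : ∀ x y : H, ‖N x - N y‖ ≤ ‖x - y‖) {f : H → H}
    (hf : ∀ x : H, f x = (1 - c) • x + c • N x) {p x : H}
    (hp : f p = p) (hge : ‖x - p‖ ≤ ‖f x - p‖) : f x = x := by
  obtain ⟨hc0, hc1⟩ := hc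
  have hNp : N p = p := by
    have := hp
    rw [hf p] at this
    have h3 : c • N p = p - (1 - c) • p := eq_sub_of_add_eq' this
    have h2 : c • N p = c • p := by
      rw [h3, sub_smul, one_smul]; abel
    have := smul_right_injective H (ne_of_gt hc0) h2
    exact this
  have hdecomp : f x - p = (1 - c) • (x - p) + c • (N x - p) := by
    rw [hf x, smul_sub, smul_sub, sub_smul, one_smul, sub_smul, one_smul]; abel
  have hkey : ‖f x - p‖ ^ 2
      = (1 - c) * ‖x - p‖ ^ 2 + c * ‖N x - p‖ ^ 2
        - c * (1 - c) * ‖(x - p) - (N x - p)‖ ^ 2 := by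
    rw [hdecomp]; exact avg_norm_sq_identity c _ _
  have hNle : ‖N x - p‖ ≤ ‖x - p‖ := by
    have := hN x p; rwa [hNp] at this
  have hsq : ‖f x - p‖ ^ 2 ≤ ‖x - p‖ ^ 2 - c * (1 - c) * ‖x - N x‖ ^ 2 := by
    have h1 : c * ‖N x - p‖ ^ 2 ≤ c * ‖x - p‖ ^ 2 := by
      apply mul_le_mul_of_nonneg_left _ (le_of_lt hc0)
      exact pow_le_pow_left₀ (norm_nonneg _) hNle 2
    have h2 : (x - p) - (N x - p) = x - N x := by abel
    rw [hkey, h2]; nlinarith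
  have hge2 : ‖x - p‖ ^ 2 ≤ ‖f x - p‖ ^ 2 :=
    pow_le_pow_left₀ (norm_nonneg _) hge 2
  have hz : c * (1 - c) * ‖x - N x‖ ^ 2 ≤ 0 := by nlinarith
  have hpos : 0 < c * (1 - c) := mul_pos hc0 (by linarith)
  have : ‖x - N x‖ ^ 2 ≤ 0 := by nlinarith
  have hNx : N x = x := by
    have : ‖x - N x‖ = 0 := by nlinarith [sq_nonneg ‖x - N x‖, norm_nonneg (x - N x)]
    have := norm_eq_zero.mp this
    have := sub_eq_zero.mp this
    exact this.symm
  rw [hf x, hNx, ← add_smul]; simp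

/-- Folding a list of maps that fix `p` and are nonexpansive doesn't increase
distance to `p`. -/
private lemma foldl_dist_le {p : H} :
    ∀ (L : List (H → H)),
      (∀ f ∈ L, f p = p ∧ ∀ x y : H, ‖f x - f y‖ ≤ ‖x - y‖) →
      ∀ y : H, ‖List.foldl (fun z f => f z) y L - p‖ ≤ ‖y - p‖
  | [], _, y => by simp
  | f :: L, hL, y => by
    have hf := hL f List.mem_cons_self
    have ih := foldl_dist_le L (fun g hg => hL g (List.mem_cons_of_mem _ hg)) (f y)
    simp only [List.foldl_cons]
    calc ‖List.foldl (fun z f => f z) (f y) L - p‖ ≤ ‖f y - p‖ := ih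
      _ = ‖f y - f p‖ := by rw [hf.1]
      _ ≤ ‖y - p‖ := hf.2 y p

private lemma foldl_fixed_of_mem {p : H} :
    ∀ (L : List (H → H)),
      (∀ f ∈ L, f p = p ∧ (∀ x y : H, ‖f x - f y‖ ≤ ‖x - y‖) ∧
        ∀ x : H, ‖x - p‖ ≤ ‖f x - p‖ → f x = x) →
      ∀ x : H, List.foldl (fun z f => f z) x L = x →
      ∀ f ∈ L, f x = x
  | [], _, x, _ => by simp
  | f :: L, hL, x, hfold => by
    have hf := hL f List.mem_cons_self
    have hL' : ∀ g ∈ L, g p = p ∧ ∀ x y : H, ‖g x - g y‖ ≤ ‖x - y‖ :=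
      fun g hg => ⟨(hL g (List.mem_cons_of_mem _ hg)).1,
        (hL g (List.mem_cons_of_mem _ hg)).2.1⟩
    simp only [List.foldl_cons] at hfold
    have hle : ‖x - p‖ ≤ ‖f x - p‖ := by
      calc ‖x - p‖ = ‖List.foldl (fun z f => f z) (f x) L - p‖ := by rw [hfold]
        _ ≤ ‖f x - p‖ := foldl_dist_le L hL' (f x)
    have hfx : f x = x := hf.2.2 x hle
    intro g hg
    rcases List.mem_cons.mp hg with rfl | hg
    · exact hfx
    · rw [hfx] at hfold
      exact foldl_fixed_of_mem L (fun g hg => hL g (List.mem_cons_of_mem _ hg))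
        x hfold g hg

end Aux

/-- If `h₁,…,h_k` are averaged operators on a real Hilbert space with
`⋂ Fix(h_j) ≠ ∅`, then `Fix(h_k ∘ ⋯ ∘ h_1) = ⋂_{j=1}^k Fix(h_j)`. -/
theorem fixedPoints_comp_finitely_many_averaged
    {H : Type*} [NormedAddCommGroup H] [InnerProductSpace ℝ H] [CompleteSpace H]
    (k : ℕ) (hk : 1 ≤ k) (h : Fin k → H → H)
    (hav : ∀ j, ∃ c ∈ Set.Ioo (0 : ℝ) 1, ∃ N : H → H,
      (∀ x y : H, ‖N x - N y‖ ≤ ‖x - y‖) ∧ ∀ x : H, h j x = (1 - c) • x + c • N x)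
    (hfix : (⋂ j, Function.fixedPoints (h j)).Nonempty) :
    -- `Fin.foldl` applies `h 0` first and `h (k-1)` last, i.e. `h_k ∘ ⋯ ∘ h_1`
    Function.fixedPoints (fun x => Fin.foldl k (fun y j => h j y) x) =
      ⋂ j, Function.fixedPoints (h j) := by
  obtain ⟨p, hp⟩ := hfix
  simp only [Set.mem_iInter, Function.mem_fixedPoints, Function.IsFixedPt] at hp
  -- basic facts about each h j
  have hprop : ∀ j, (h j) p = p ∧ (∀ x y : H, ‖h j x - h j y‖ ≤ ‖x - y‖) ∧
      ∀ x : H, ‖x - p‖ ≤ ‖h j x - p‖ → h j x = x := by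
    intro j
    obtain ⟨c, hc, N, hN, hform⟩ := hav j
    refine ⟨hp j, ?_, fun x hx => averaged_rigid hc hN hform (hp j) hx⟩
    intro x y
    have : h j x - h j y = (1 - c) • (x - y) + c • (N x - N y) := by
      rw [hform x, hform y, smul_sub, smul_sub]; abel
    rw [this]
    calc ‖(1 - c) • (x - y) + c • (N x - N y)‖
        ≤ ‖(1 - c) • (x - y)‖ + ‖c • (N x - N y)‖ := norm_add_le _ _
      _ = |1 - c| * ‖x - y‖ + |c| * ‖N x - N y‖ := by rw [norm_smul, norm_smul]; rfl
      _ ≤ (1 - c) * ‖x - y‖ + c * ‖x - y‖ := by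
          rw [abs_of_nonneg (by linarith [hc.2] : (0:ℝ) ≤ 1 - c),
            abs_of_nonneg (le_of_lt hc.1)]
          have := mul_le_mul_of_nonneg_left (hN x y) (le_of_lt hc.1)
          linarith
      _ = ‖x - y‖ := by ring
  ext x
  simp only [Function.mem_fixedPoints, Function.IsFixedPt, Set.mem_iInter]
  rw [Fin.foldl_eq_foldl_finRange]
  constructor
  · intro hfold j
    have hLprop : ∀ f ∈ (List.finRange k).map h, f p = p ∧
        (∀ x y : H, ‖f x - f y‖ ≤ ‖x - y‖) ∧
        ∀ x : H, ‖x - p‖ ≤ ‖f x - p‖ → f x = x := by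
      intro f hf
      obtain ⟨j, _, rfl⟩ := List.mem_map.mp hf
      exact hprop j
    have hfold' : List.foldl (fun z f => f z) x ((List.finRange k).map h) = x := by
      rw [List.foldl_map]; exact hfold
    exact foldl_fixed_of_mem ((List.finRange k).map h) hLprop x hfold' (h j)
      (List.mem_map.mpr ⟨j, List.mem_finRange j, rfl⟩)
  · intro hall
    have : ∀ (L : List (Fin k)), List.foldl (fun y j => h j y) x L = x := by
      intro L
      induction L with
      | nil => simp
      | cons j L ih => simp [hall j, ih]
    exact this _
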